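/- For the quaternion polynomial A(t) = t³ + (2j + k)t² − (1 + 2i)t − k, the product A(t)·conj(A(t)) equals (t² + 1)³, and A(t)·i·conj(A(t)) = (t⁶ − 7t⁴ + 7t² − 1)i + (2t⁵ − 12t³ + 2t)j + (−4t⁵ + 4t)k. -/

import Mathlib

open Quaternion

/-- The quaternion unit i. -/
def qI : Quaternion ℝ := ⟨0, 1, 0, 0⟩
/-- The quaternion 2j + k. -/
def q2jk : Quaternion ℝ := ⟨0, 0, 2, 1⟩
/-- The quaternion 1 + 2i. -/
def q12i : Quaternion ℝ := ⟨1, 2, 0, 0⟩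
/-- The quaternion unit k. -/
def qK : Quaternion ℝ := ⟨0, 0, 0, 1⟩
/-- The polynomial A(t) = t³ + (2j + k)t² − (1 + 2i)t − k evaluated at a real t. -/
noncomputable def Aev (t : ℝ) : Quaternion ℝ :=
  ((t : ℝ) : Quaternion ℝ) ^ 3 + q2jk * ((t : ℝ) : Quaternion ℝ) ^ 2 -
    q12i * ((t : ℝ) : Quaternion ℝ) - qK

/-- For A(t) = t³ + (2j + k)t² − (1 + 2i)t − k ∈ ℍ[t] one has
A(t)·conj(A(t)) = (t² + 1)³ and
A(t)·i·conj(A(t)) = (t⁶ − 7t⁴ + 7t² − 1)i + (2t⁵ − 12t³ + 2t)j + (−4t⁵ + 4t)k. -/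
theorem example_quaternion_polynomial_identities :
    ∀ t : ℝ,
      Aev t * star (Aev t) = (((t ^ 2 + 1) ^ 3 : ℝ) : Quaternion ℝ) ∧
      Aev t * qI * star (Aev t) =
        (⟨0, t ^ 6 - 7 * t ^ 4 + 7 * t ^ 2 - 1,
            2 * t ^ 5 - 12 * t ^ 3 + 2 * t,
            -4 * t ^ 5 + 4 * t⟩ : Quaternion ℝ) := by
  intro t
  have hA : Aev t = ⟨t ^ 3 - t, -2 * t, 2 * t ^ 2, t ^ 2 - 1⟩ := by
    ext <;>
      simp [Aev, ← Quaternion.coe_pow, Quaternion.re_coe,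
        Quaternion.imI_coe, Quaternion.imJ_coe, Quaternion.imK_coe, Quaternion.re_mul, Quaternion.imI_mul, Quaternion.imJ_mul, Quaternion.imK_mul] <;> simp [q2jk, q12i, qK] <;> ring
  have hS : star (Aev t) = ⟨t ^ 3 - t, 2 * t, -2 * t ^ 2, -(t ^ 2 - 1)⟩ := by
    ext <;> simp [Quaternion.re_star, Quaternion.imI_star, Quaternion.imJ_star,
      Quaternion.imK_star] <;> simp [hA]
  constructor <;>
  · ext <;>
      simp [Quaternion.re_mul, Quaternion.imI_mul, Quaternion.imJ_mul,
        Quaternion.imK_mul, ← Quaternion.coe_pow, ← Quaternion.coe_one,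
        ← Quaternion.coe_add, Quaternion.re_coe, Quaternion.imI_coe,
        Quaternion.imJ_coe, Quaternion.imK_coe] <;> simp [qI, hA, hS] <;> ring
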